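/- For q > 0 and every real λ ≥ 0, E[(B²/(λ² + B²))^q] = E[exp(-λ √(2 Γ_q))], where B is standard Gaussian and Γ_q is an independent Gamma(q) random variable. -/

import Mathlib

open MeasureTheory ProbabilityTheory Real Set
open scoped ENNReal NNReal

lemma my_integral_withDensity' (p f : ℝ → ℝ) (hp : Measurable p) (hp0 : ∀ x, 0 ≤ p x) :
    ∫ x, f x ∂(MeasureTheory.volume.withDensity fun x => ENNReal.ofReal (p x))
      = ∫ x, p x * f x := by
  rw [show (fun x => ENNReal.ofReal (p x)) = (fun x => ((p x).toNNReal : ℝ≥0∞)) from rfl,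
    integral_withDensity_eq_integral_smul hp.real_toNNReal]
  refine integral_congr_ae (Filter.Eventually.of_forall fun x => ?_)
  simp [NNReal.smul_def, Real.coe_toNNReal _ (hp0 x)]

lemma gamma_laplace {q : ℝ} (hq : 0 < q) {s : ℝ} (hs : 0 ≤ s) :
    ∫ t, Real.exp (-(s * t)) ∂(gammaMeasure q 1) = (1 + s) ^ (-q) := by
  rw [gammaMeasure, show gammaPDF q 1 = fun x => ENNReal.ofReal (gammaPDFReal q 1 x) from rfl,
    my_integral_withDensity' _ _ (measurable_gammaPDFReal q 1)
      (gammaPDFReal_nonneg hq one_pos)]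
  have h0 : ∀ x ∉ Ici (0:ℝ), gammaPDFReal q 1 x * Real.exp (-(s * x)) = 0 := by
    intro x hx
    simp only [mem_Ici, not_le] at hx
    simp [gammaPDFReal, not_le.2 hx]
  rw [← setIntegral_eq_integral_of_forall_compl_eq_zero h0, integral_Ici_eq_integral_Ioi]
  have hcongr : ∀ x ∈ Ioi (0:ℝ), gammaPDFReal q 1 x * Real.exp (-(s * x))
      = (Real.Gamma q)⁻¹ * (x ^ (q-1) * Real.exp (-((1+s) * x))) := by
    intro x hx
    simp only [gammaPDFReal, if_pos (mem_Ioi.1 hx).le, Real.one_rpow, mul_assoc, ← Real.exp_add]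
    rw [show -(1*x) + -(s*x) = -((1+s)*x) by ring, one_div]
  rw [setIntegral_congr_fun measurableSet_Ioi hcongr, integral_const_mul,
    integral_rpow_mul_exp_neg_mul_Ioi hq (by linarith : (0:ℝ) < 1 + s)]
  rw [one_div, Real.inv_rpow (by linarith), ← Real.rpow_neg (by linarith)]
  field_simp [Real.Gamma_pos_of_pos hq |>.ne']

section Gauss

variable {b : ℝ}

noncomputable def Gb (b : ℝ) (x : ℝ) : ℝ := Real.exp (-(x - b/x)^2/2)

lemma Gb_meas (b : ℝ) : Measurable (Gb b) := by
  unfold Gb; fun_prop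

lemma Gb_integrable (hb : 0 < b) : Integrable (Gb b) := by
  refine Integrable.mono' ((integrable_exp_neg_mul_sq (by norm_num : (0:ℝ) < 1/2)).const_mul
    (Real.exp b)) (Gb_meas b).aestronglyMeasurable (Filter.Eventually.of_forall fun x => ?_)
  rw [Real.norm_eq_abs, Gb, Real.abs_exp, ← Real.exp_add]
  apply Real.exp_le_exp.2
  rcases eq_or_ne x 0 with rfl | hx
  · simp; nlinarith
  · have h : (x - b/x)^2 = x^2 - 2*b + (b/x)^2 := by field_simp; ring
    nlinarith [sq_nonneg (b/x)]

lemma Gb_neg (x : ℝ) : Gb b (-x) = Gb b x := by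
  unfold Gb
  rw [show -x - b/(-x) = -(x - b/x) by ring, neg_sq]

lemma hasDeriv_f (hb : 0 < b) {x : ℝ} (hx : x ≠ 0) :
    HasDerivAt (fun x => x - b/x) (1 + b/x^2) x := by
  have h := ((hasDerivAt_inv hx).const_mul b)
  have h2 := (hasDerivAt_id x).sub h
  simp only [div_eq_mul_inv]
  exact h2.congr_deriv (by ring)

lemma injOn_f (hb : 0 < b) : InjOn (fun x => x - b/x) (Ioi 0) := by
  refine (strictMonoOn_of_deriv_pos (convex_Ioi 0) ?_ ?_).injOn
  · exact continuousOn_id.sub (continuousOn_const.div continuousOn_id fun x hx => ne_of_gt hx)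
  · intro x hx
    rw [interior_Ioi] at hx
    rw [(hasDeriv_f hb (ne_of_gt hx)).deriv]
    positivity

lemma image_f (hb : 0 < b) : (fun x => x - b/x) '' (Ioi 0) = univ := by
  refine eq_univ_of_forall fun y => ?_
  have h4b : (0:ℝ) < y^2 + 4*b := by positivity
  set s := Real.sqrt (y^2 + 4*b) with hs
  have hs2 : s^2 = y^2 + 4*b := Real.sq_sqrt h4b.le
  have hsy : |y| < s := by
    rw [hs, ← Real.sqrt_sq_eq_abs]
    exact Real.sqrt_lt_sqrt (sq_nonneg y) (by linarith)
  have hx0 : 0 < (y + s)/2 := by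
    have := neg_abs_le y
    linarith
  refine ⟨(y + s)/2, hx0, ?_⟩
  have hne2 : y + s ≠ 0 := by
    intro h; rw [h] at hx0; simp at hx0
  show (y + s)/2 - b/((y + s)/2) = y
  field_simp
  nlinarith [hs2]

lemma cov_main (hb : 0 < b) :
    ∫ u : ℝ, Real.exp (-u^2/2) = ∫ x in Ioi (0:ℝ), (1 + b/x^2) * Gb b x := by
  have h := integral_image_eq_integral_abs_deriv_smul (f := fun x => x - b/x)
    (f' := fun x => 1 + b/x^2) measurableSet_Ioi
    (fun x hx => ((hasDeriv_f hb (ne_of_gt hx)).hasDerivWithinAt))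
    (injOn_f hb) (fun u => Real.exp (-u^2/2))
  rw [image_f hb, Measure.restrict_univ] at h
  rw [h]
  refine setIntegral_congr_fun measurableSet_Ioi fun x hx => ?_
  have hx0 : (0:ℝ) < x := hx
  rw [smul_eq_mul, abs_of_pos (by positivity)]
  rfl

lemma cov_recip (hb : 0 < b) :
    ∫ x in Ioi (0:ℝ), Gb b x = ∫ x in Ioi (0:ℝ), (b/x^2) * Gb b x := by
  have himg : (fun x => b/x) '' (Ioi 0) = Ioi (0:ℝ) := by
    ext y
    constructor
    · rintro ⟨x, hx, rfl⟩; exact div_pos hb hx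
    · intro hy; exact ⟨b/y, div_pos hb hy, by field_simp⟩
  have hderiv : ∀ x ∈ Ioi (0:ℝ), HasDerivWithinAt (fun x => b/x) (b * (-(x^2)⁻¹)) (Ioi 0) x := by
    intro x hx
    simpa only [div_eq_mul_inv] using
      (((hasDerivAt_inv (ne_of_gt hx)).const_mul b)).hasDerivWithinAt
  have hinj : InjOn (fun x => b/x) (Ioi 0) := by
    intro x hx y hy hxy
    simp only at hxy
    rw [div_eq_div_iff (ne_of_gt hx) (ne_of_gt hy)] at hxy
    exact (mul_left_cancel₀ (ne_of_gt hb) (by linarith)).symm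
  have h := integral_image_eq_integral_abs_deriv_smul measurableSet_Ioi hderiv hinj (Gb b)
  rw [himg] at h
  rw [h]
  refine setIntegral_congr_fun measurableSet_Ioi fun x hx => ?_
  have hx0 : (0:ℝ) < x := hx
  rw [smul_eq_mul]
  have hgb : Gb b (b/x) = Gb b x := by
    unfold Gb
    rw [show b/(b/x) = x by field_simp, show b/x - x = -(x - b/x) by ring, neg_sq]
  rw [show b * -(x^2)⁻¹ = -(b/x^2) by ring, abs_neg, abs_of_pos (by positivity), hgb]

end Gauss

section Gauss2
variable {b : ℝ}

lemma int_recip (hb : 0 < b) : IntegrableOn (fun x => (b/x^2) * Gb b x) (Ioi (0:ℝ)) := by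
  have himg : (fun x => b/x) '' (Ioi 0) = Ioi (0:ℝ) := by
    ext y
    constructor
    · rintro ⟨x, hx, rfl⟩; exact div_pos hb hx
    · intro hy; exact ⟨b/y, div_pos hb hy, by field_simp⟩
  have hderiv : ∀ x ∈ Ioi (0:ℝ), HasDerivWithinAt (fun x => b/x) (b * (-(x^2)⁻¹)) (Ioi 0) x := by
    intro x hx
    simpa only [div_eq_mul_inv] using
      (((hasDerivAt_inv (ne_of_gt hx)).const_mul b)).hasDerivWithinAt
  have hinj : InjOn (fun x => b/x) (Ioi 0) := by
    intro x hx y hy hxy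
    simp only at hxy
    rw [div_eq_div_iff (ne_of_gt hx) (ne_of_gt hy)] at hxy
    exact (mul_left_cancel₀ (ne_of_gt hb) (by linarith)).symm
  have h := (integrableOn_image_iff_integrableOn_abs_deriv_smul measurableSet_Ioi hderiv hinj
    (Gb b)).mp (by rw [himg]; exact (Gb_integrable hb).integrableOn)
  refine h.congr_fun (fun x hx => ?_) measurableSet_Ioi
  have hx0 : (0:ℝ) < x := hx
  have hgb : Gb b (b/x) = Gb b x := by
    unfold Gb
    rw [show b/(b/x) = x by field_simp, show b/x - x = -(x - b/x) by ring, neg_sq]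
  simp only
  rw [smul_eq_mul, show b * -(x^2)⁻¹ = -(b/x^2) by ring, abs_neg,
    abs_of_pos (by positivity), hgb]

lemma half_integral (hb : 0 < b) :
    ∫ x in Ioi (0:ℝ), Gb b x = Real.sqrt (2*π) / 2 := by
  have hgauss : ∫ u : ℝ, Real.exp (-u^2/2) = Real.sqrt (2*π) := by
    have := integral_gaussian (1/2)
    simp only [show ∀ u : ℝ, -(1/2 : ℝ) * u^2 = -u^2/2 from fun u => by ring] at this
    rw [this]
    rw [show π/(1/2:ℝ) = 2*π by ring]
  have hsplit : ∫ x in Ioi (0:ℝ), (1 + b/x^2) * Gb b x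
      = (∫ x in Ioi (0:ℝ), Gb b x) + ∫ x in Ioi (0:ℝ), (b/x^2) * Gb b x := by
    rw [← integral_add ((Gb_integrable hb).integrableOn) (int_recip hb)]
    refine setIntegral_congr_fun measurableSet_Ioi fun x hx => ?_
    ring
  have h := (cov_main hb).symm.trans hgauss
  rw [hsplit, ← cov_recip hb] at h
  linarith

lemma full_integral (hb : 0 < b) : ∫ x : ℝ, Gb b x = Real.sqrt (2*π) := by
  have h1 : ∫ x in Iic (0:ℝ), Gb b x = ∫ x in Ioi (0:ℝ), Gb b x := by
    have h2 := integral_comp_neg_Ioi (c := (0:ℝ)) (f := Gb b)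
    simp only [neg_zero] at h2
    rw [← h2]
    simp only [Gb_neg]
  rw [← intervalIntegral.integral_Iic_add_Ioi ((Gb_integrable hb).integrableOn)
    ((Gb_integrable hb).integrableOn), h1, half_integral hb]
  ring

end Gauss2

lemma gauss_exp {c : ℝ} (hc : 0 ≤ c) :
    ∫ x, Real.exp (-(c / x^2)) ∂(gaussianReal 0 1) = Real.exp (-Real.sqrt (2*c)) := by
  rcases eq_or_lt_of_le hc with rfl | hc
  · simp
  set b := Real.sqrt (2*c) with hbdef
  have hb : 0 < b := Real.sqrt_pos.2 (by linarith)
  have hb2 : b^2 = 2*c := Real.sq_sqrt (by linarith)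
  clear_value b
  rw [gaussianReal_of_var_ne_zero 0 one_ne_zero,
    show gaussianPDF 0 1 = fun x => ENNReal.ofReal (gaussianPDFReal 0 1 x) from rfl,
    my_integral_withDensity' _ _ (measurable_gaussianPDFReal 0 1) (gaussianPDFReal_nonneg 0 1)]
  have hpdf : ∀ x : ℝ, gaussianPDFReal 0 1 x * Real.exp (-(c/x^2))
      = (Real.sqrt (2*π))⁻¹ * (Real.exp (-x^2/2) * Real.exp (-(c/x^2))) := by
    intro x
    simp only [gaussianPDFReal, NNReal.coe_one, mul_one, sub_zero]
    ring_nf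
  simp_rw [hpdf]
  rw [integral_const_mul]
  have h0 : ∀ᵐ x : ℝ, x ≠ 0 := by
    rw [ae_iff]
    simp only [not_ne_iff, Set.setOf_eq_eq_singleton]
    exact volume_singleton
  have hae : (fun x : ℝ => Real.exp (-x^2/2) * Real.exp (-(c/x^2)))
      =ᵐ[volume] fun x => Real.exp (-b) * Gb b x := by
    filter_upwards [h0] with x hx
    rw [← Real.exp_add, Gb, ← Real.exp_add, Real.exp_eq_exp]
    have hx2 : x^2 ≠ 0 := pow_ne_zero 2 hx
    field_simp
    linear_combination hb2
  rw [integral_congr_ae hae, integral_const_mul, full_integral hb]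
  have h2π : Real.sqrt (2*π) ≠ 0 := by positivity
  field_simp

theorem gaussian_gamma_laplace_identity (q : ℝ) (hq : 0 < q) (l : ℝ) (hl : 0 ≤ l) :
    (∫ x : ℝ, (x ^ 2 / (l ^ 2 + x ^ 2)) ^ q ∂(gaussianReal 0 1))
      = ∫ t : ℝ, Real.exp (-l * Real.sqrt (2 * t)) ∂(gammaMeasure q 1) := by
  haveI : IsProbabilityMeasure (gammaMeasure q 1) := isProbabilityMeasure_gammaMeasure hq one_pos
  have hν0 : gammaMeasure q 1 {t : ℝ | t < 0} = 0 := by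
    rw [gammaMeasure, show {t : ℝ | t < 0} = Iio 0 from rfl,
      withDensity_apply _ (measurableSet_Iio : MeasurableSet (Iio (0:ℝ)))]
    exact lintegral_gammaPDF_of_nonpos le_rfl
  -- Step A : rewrite LHS
  have hA : ∀ x : ℝ, x ≠ 0 → (x ^ 2 / (l ^ 2 + x ^ 2)) ^ q
      = ∫ t, Real.exp (-(l^2 * t / x^2)) ∂(gammaMeasure q 1) := by
    intro x hx
    have hx2 : (0:ℝ) < x^2 := by positivity
    have hs : (0:ℝ) ≤ l^2/x^2 := by positivity
    have h1 : ∫ t, Real.exp (-(l^2 * t / x^2)) ∂(gammaMeasure q 1)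
        = (1 + l^2/x^2) ^ (-q) := by
      rw [← gamma_laplace hq hs]
      refine integral_congr_ae (Filter.Eventually.of_forall fun t => ?_)
      show Real.exp (-(l^2 * t / x^2)) = Real.exp (-(l^2 / x^2 * t))
      rw [mul_div_right_comm]
    have hden : (0:ℝ) < l^2 + x^2 := by positivity
    rw [h1, show (1:ℝ) + l^2/x^2 = (l^2+x^2)/x^2 by field_simp; ring,
      Real.rpow_neg (le_of_lt (div_pos hden hx2)),
      ← Real.inv_rpow (le_of_lt (div_pos hden hx2)), inv_div]
  have hLHS : ∫ x : ℝ, (x ^ 2 / (l ^ 2 + x ^ 2)) ^ q ∂(gaussianReal 0 1)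
      = ∫ x : ℝ, (∫ t, Real.exp (-(l^2 * t / x^2)) ∂(gammaMeasure q 1)) ∂(gaussianReal 0 1) := by
    refine integral_congr_ae ?_
    have h0 : ∀ᵐ x : ℝ ∂(gaussianReal 0 1), x ≠ 0 := by
      have hz : gaussianReal 0 1 {(0:ℝ)} = 0 :=
        gaussianReal_absolutelyContinuous 0 one_ne_zero volume_singleton
      rw [ae_iff]
      simpa [Set.setOf_eq_eq_singleton] using hz
    filter_upwards [h0] with x hx using hA x hx
  -- Step B : Fubini
  have hmeas : Measurable (Function.uncurry fun x t : ℝ => Real.exp (-(l^2 * t / x^2))) := by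
    apply Measurable.exp
    exact ((measurable_const.mul measurable_snd).div ((measurable_fst.pow_const 2))).neg
  have hae2 : ∀ᵐ p : ℝ×ℝ ∂((gaussianReal 0 1).prod (gammaMeasure q 1)), 0 ≤ p.2 := by
    rw [ae_iff]
    have hset : {p : ℝ×ℝ | ¬ 0 ≤ p.2} = (univ : Set ℝ) ×ˢ {t : ℝ | t < 0} := by
      ext p; simp [not_le]
    rw [hset, Measure.prod_prod, hν0, mul_zero]
  have hint : Integrable (Function.uncurry fun x t : ℝ => Real.exp (-(l^2 * t / x^2)))
      ((gaussianReal 0 1).prod (gammaMeasure q 1)) := by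
    refine Integrable.mono' (integrable_const 1) hmeas.aestronglyMeasurable ?_
    filter_upwards [hae2] with p hp
    simp only [Function.uncurry]
    rw [Real.norm_eq_abs, Real.abs_exp]
    refine Real.exp_le_one_iff.2 (neg_nonpos.2 ?_)
    exact div_nonneg (mul_nonneg (sq_nonneg l) hp) (sq_nonneg p.1)
  have hswap := integral_integral_swap hint
  -- Step C : inner Gaussian integral
  have hC : ∫ t, (∫ x, Real.exp (-(l^2 * t / x^2)) ∂(gaussianReal 0 1)) ∂(gammaMeasure q 1)
      = ∫ t, Real.exp (-l * Real.sqrt (2 * t)) ∂(gammaMeasure q 1) := by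
    refine integral_congr_ae ?_
    have h0 : ∀ᵐ t : ℝ ∂(gammaMeasure q 1), 0 ≤ t := by
      rw [ae_iff]
      simpa [not_le] using hν0
    filter_upwards [h0] with t ht
    have hc : (0:ℝ) ≤ l^2 * t := mul_nonneg (sq_nonneg l) ht
    rw [gauss_exp hc, show 2*(l^2*t) = l^2*(2*t) by ring,
      Real.sqrt_mul (sq_nonneg l), Real.sqrt_sq hl, neg_mul]
  rw [hLHS, hswap, hC]
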